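/- In an optimal solution, two same-score vertices placed in different groups have equal cut contributions: for every k ≥ 1, if x : V → Fin k satisfies f(x) ≥ f(y) for every assignment y : V → Fin k, and i, j ∈ V satisfy s(i) = s(j) and x(i) ≠ x(j), then ∑_{v ∈ V, x(v) ≠ x(i)} w(i,v) = ∑_{v ∈ V, x(v) ≠ x(j)} w(j,v). -/
import Mathlib


open Finset

variable {V : Type*} [Fintype V]

def wgt (s : V → ℤ × ℤ × ℤ) (i j : V) : ℤ :=
  |(s i).1 - (s j).1| + |(s i).2.1 - (s j).2.1| + |(s i).2.2 - (s j).2.2|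

def objf (s : V → ℤ × ℤ × ℤ) {k : ℕ} (x : V → Fin k) : ℤ :=
  ∑ i : V, ∑ j : V, if x i ≠ x j then wgt s i j else 0

def wgt' (s : V → ℤ × ℤ × ℤ) (a b : ℤ × ℤ × ℤ) : ℤ :=
  ∑ i ∈ univ.filter (fun i => s i = a), ∑ j ∈ univ.filter (fun j => s j = b), wgt s i j

def objR (s : V → ℤ × ℤ × ℤ) {k : ℕ} (y : ℤ × ℤ × ℤ → Fin k) : ℤ :=
  ∑ a ∈ univ.image s, ∑ b ∈ univ.image s, if y a ≠ y b then wgt' s a b else 0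

lemma wgt_self (s : V → ℤ × ℤ × ℤ) (i : V) : wgt s i i = 0 := by simp [wgt]

lemma wgt_comm (s : V → ℤ × ℤ × ℤ) (i j : V) : wgt s i j = wgt s j i := by
  simp [wgt, abs_sub_comm]

lemma t_symm (s : V → ℤ × ℤ × ℤ) {k : ℕ} (x : V → Fin k) (u v : V) :
    (if x u ≠ x v then wgt s u v else 0) = (if x v ≠ x u then wgt s v u else 0) := by
  rw [wgt_comm]; congr 1; simp [ne_comm]

lemma objf_split (s : V → ℤ × ℤ × ℤ) {k : ℕ} (x : V → Fin k) (i : V) [DecidableEq V] :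
    objf s x = 2 * (∑ v : V, if x i ≠ x v then wgt s i v else 0)
      + ∑ u ∈ ({i}ᶜ : Finset V), ∑ v ∈ ({i}ᶜ : Finset V),
          if x u ≠ x v then wgt s u v else 0 := by
  unfold objf
  rw [Fintype.sum_eq_add_sum_compl i]
  have h1 : ∀ u : V, (∑ v : V, if x u ≠ x v then wgt s u v else 0)
      = (if x u ≠ x i then wgt s u i else 0)
        + ∑ v ∈ ({i}ᶜ : Finset V), if x u ≠ x v then wgt s u v else 0 := by
    intro u
    rw [Fintype.sum_eq_add_sum_compl i]
  rw [Finset.sum_congr rfl (fun u _ => h1 u), Finset.sum_add_distrib, h1 i]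
  have h2 : (∑ u ∈ ({i}ᶜ : Finset V), if x u ≠ x i then wgt s u i else 0)
      = ∑ u ∈ ({i}ᶜ : Finset V), if x i ≠ x u then wgt s i u else 0 :=
    Finset.sum_congr rfl (fun u _ => t_symm s x u i)
  have h3 : (∑ v : V, if x i ≠ x v then wgt s i v else 0)
      = (if x i ≠ x i then wgt s i i else 0)
        + ∑ v ∈ ({i}ᶜ : Finset V), if x i ≠ x v then wgt s i v else 0 := by
    rw [Fintype.sum_eq_add_sum_compl i]
  simp only [ne_eq, not_true_eq_false, if_false, zero_add] at h3
  rw [h2, ← h3]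
  have : (if x i ≠ x i then wgt s i i else 0) = 0 := by simp
  rw [this]
  ring

lemma objf_update (s : V → ℤ × ℤ × ℤ) {k : ℕ} (x : V → Fin k) (i : V) (c : Fin k)
    [DecidableEq V] :
    objf s (Function.update x i c)
      = objf s x + 2 * (∑ v : V, if x v ≠ c then wgt s i v else 0)
        - 2 * (∑ v : V, if x v ≠ x i then wgt s i v else 0) := by
  set x' := Function.update x i c with hx'
  rw [objf_split s x' i, objf_split s x i]
  have hR : (∑ u ∈ ({i}ᶜ : Finset V), ∑ v ∈ ({i}ᶜ : Finset V),
        if x' u ≠ x' v then wgt s u v else 0)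
      = ∑ u ∈ ({i}ᶜ : Finset V), ∑ v ∈ ({i}ᶜ : Finset V),
        if x u ≠ x v then wgt s u v else 0 := by
    refine Finset.sum_congr rfl (fun u hu => Finset.sum_congr rfl (fun v hv => ?_))
    simp only [Finset.mem_compl, Finset.mem_singleton] at hu hv
    rw [hx', Function.update_of_ne hu, Function.update_of_ne hv]
  have hS' : (∑ v : V, if x' i ≠ x' v then wgt s i v else 0)
      = ∑ v : V, if x v ≠ c then wgt s i v else 0 := by
    refine Finset.sum_congr rfl (fun v _ => ?_)
    by_cases hv : v = i
    · subst hv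
      simp [hx', wgt_self]
    · rw [hx', Function.update_of_ne hv, Function.update_self]
      congr 1
      simp [ne_comm]
  have hS : (∑ v : V, if x i ≠ x v then wgt s i v else 0)
      = ∑ v : V, if x v ≠ x i then wgt s i v else 0 := by
    refine Finset.sum_congr rfl (fun v _ => ?_)
    congr 1
    simp [ne_comm]
  rw [hR, hS', hS]
  ring

/-- In an optimal solution, two same-score vertices placed in different groups have
equal cut contributions. -/
theorem equal_cut_contributions (s : V → ℤ × ℤ × ℤ) (k : ℕ) (hk : 1 ≤ k)
    (x : V → Fin k) (hopt : ∀ y : V → Fin k, objf s x ≥ objf s y)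
    (i j : V) (hs : s i = s j) (hx : x i ≠ x j) :
    (∑ v : V, if x v ≠ x i then wgt s i v else 0) =
      (∑ v : V, if x v ≠ x j then wgt s j v else 0) := by
  classical
  have hw : ∀ v : V, wgt s i v = wgt s j v := by
    intro v; unfold wgt; rw [hs]
  have h1 := hopt (Function.update x i (x j))
  rw [objf_update] at h1
  have h2 := hopt (Function.update x j (x i))
  rw [objf_update] at h2
  have e1 : (∑ v : V, if x v ≠ x j then wgt s i v else 0)
      = ∑ v : V, if x v ≠ x j then wgt s j v else 0 :=
    Finset.sum_congr rfl (fun v _ => by rw [hw])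
  have e2 : (∑ v : V, if x v ≠ x i then wgt s j v else 0)
      = ∑ v : V, if x v ≠ x i then wgt s i v else 0 :=
    Finset.sum_congr rfl (fun v _ => by rw [hw])
  rw [e1] at h1
  rw [e2] at h2
  linarith
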